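/- arXiv:2310.08831 — 10 statements merged into one kernel-verified Lean document; each statement's English description precedes it below -/
import Mathlib

section
/- Let S be a symmetric positive definite d×d real matrix such that every off-diagonal entry of S^{-1} is nonpositive, and let Σ_E = diag(a_1,…,a_d) with a_j ≥ 0 for all j. Then Σ_E + S is invertible, and the matrix Ω = (Σ_E + S)^{-1} satisfies: Ω_{jj} > 0 and a_j·Ω_{jj} ≤ 1 for every j ∈ {1,…,d}, and Ω_{jj'} ≤ 0 for all j ≠ j'. -/
open Matrix

private lemma posdef_diag_pos {d : ℕ} {N : Matrix (Fin d) (Fin d) ℝ} (h : N.PosDef) (j : Fin d) :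
    0 < N j j := by
  have h1 := h.dotProduct_mulVec_pos (x := Pi.single j 1) (by
    intro hc
    have := congrFun hc j
    simp at this)
  simpa [dotProduct, mulVec, Pi.single_apply, ite_mul, mul_ite] using h1

private lemma hMEM {d : ℕ} (M : Matrix (Fin d) (Fin d) ℝ) (k i j : Fin d) :
    (M * Matrix.single k k (1:ℝ) * M) i j = M i k * M k j := by
  simp [Matrix.mul_apply, Matrix.single, Matrix.of_apply, ite_mul, mul_ite,
    Finset.sum_ite_eq, Finset.sum_ite_eq', ite_and]

private lemma hEME {d : ℕ} (M : Matrix (Fin d) (Fin d) ℝ) (k : Fin d) :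
    Matrix.single k k (1:ℝ) * M * Matrix.single k k (1:ℝ)
      = (M k k) • Matrix.single k k (1:ℝ) := by
  ext i j
  simp [Matrix.mul_apply, Matrix.single, Matrix.of_apply, ite_mul, mul_ite,
    Finset.sum_ite_eq, Finset.sum_ite_eq', ite_and]
  by_cases h1 : k = i <;> by_cases h2 : k = j <;> simp [h1, h2]

private lemma sherman_step {d : ℕ} {T : Matrix (Fin d) (Fin d) ℝ} (hT : T.PosDef)
    (hoff : ∀ i j, i ≠ j → T⁻¹ i j ≤ 0) (k : Fin d) {b : ℝ} (hb : 0 ≤ b) :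
    (Matrix.diagonal (Pi.single k b) + T).PosDef ∧
      ∀ i j, i ≠ j → (Matrix.diagonal (Pi.single k b) + T)⁻¹ i j ≤ 0 := by
  set M := T⁻¹ with hMdef
  have hMpd : M.PosDef := hT.inv
  have hMkk : 0 < M k k := posdef_diag_pos hMpd k
  have hden : 0 < 1 + b * M k k := by positivity
  set c : ℝ := b / (1 + b * M k k) with hc
  have hc0 : 0 ≤ c := div_nonneg hb hden.le
  have hpsd : (Matrix.diagonal (Pi.single k b)).PosSemidef :=
    Matrix.PosSemidef.diagonal (by
      intro i
      by_cases h : i = k <;> simp [Pi.single_apply, h, hb])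
  have hpd : (Matrix.diagonal (Pi.single k b) + T).PosDef :=
    Matrix.PosDef.posSemidef_add hpsd hT
  set E : Matrix (Fin d) (Fin d) ℝ := Matrix.single k k (1:ℝ) with hE
  set W : Matrix (Fin d) (Fin d) ℝ := M - c • (M * E * M) with hW
  have hdetT : IsUnit T.det := hT.det_pos.ne'.isUnit
  have hTM : T * M = 1 := Matrix.mul_nonsing_inv T hdetT
  have hD : Matrix.diagonal (Pi.single k b) = b • E := by
    ext i j
    simp only [hE, Matrix.diagonal_apply, Matrix.smul_apply, Matrix.single,
      Matrix.of_apply, Pi.single_apply, smul_eq_mul]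
    by_cases h1 : i = j <;> by_cases h2 : k = i <;> simp_all <;> tauto
  have key : (Matrix.diagonal (Pi.single k b) + T) * W = 1 := by
    rw [hD, hW]
    have h1 : T * (M * E * M) = E * M := by
      rw [show M * E * M = M * (E * M) from Matrix.mul_assoc _ _ _, ← Matrix.mul_assoc, hTM,
        Matrix.one_mul]
    have h2 : E * (M * E * M) = (M k k) • (E * M) := by
      calc E * (M * E * M) = (E * M * E) * M := by
            rw [Matrix.mul_assoc, Matrix.mul_assoc, Matrix.mul_assoc]
        _ = (M k k) • (E * M) := by rw [hEME M k, Matrix.smul_mul]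
    simp only [Matrix.add_mul, Matrix.mul_sub, Matrix.mul_smul, Matrix.smul_mul, hTM, h1, h2,
      smul_smul]
    rw [smul_add, smul_smul]
    have h0 : b - c * (b * M k k) - c = 0 := by
      rw [hc]; field_simp; ring
    have hG : b • (E * M) + 1 - ((c * (b * M k k)) • (E * M) + c • (E * M))
        = 1 + (b - c * (b * M k k) - c) • (E * M) := by
      rw [sub_smul, sub_smul]; abel
    rw [hG, h0, zero_smul, add_zero]
  have hWinv : (Matrix.diagonal (Pi.single k b) + T)⁻¹ = W :=
    Matrix.inv_eq_right_inv key
  refine ⟨hpd, fun i j hij => ?_⟩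
  rw [hWinv, hW]
  have hWij : (M - c • (M * E * M)) i j = M i j - c * (M i k * M k j) := by
    simp [Matrix.sub_apply, Matrix.smul_apply, hE, hMEM, smul_eq_mul]
  rw [hWij]
  have hcm : c * M k k < 1 := by
    rw [hc, div_mul_eq_mul_div, div_lt_one hden]; linarith
  rcases eq_or_ne i k with rfl | hi
  · have hkj : M i j ≤ 0 := hoff i j hij
    have hfac : M i j * (1 - c * M i i) ≤ 0 :=
      mul_nonpos_iff.2 (Or.inr ⟨hkj, by linarith⟩)
    nlinarith [hfac]
  · rcases eq_or_ne j k with rfl | hj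
    · have hik : M i j ≤ 0 := hoff i j hij
      have hfac : M i j * (1 - c * M j j) ≤ 0 :=
        mul_nonpos_iff.2 (Or.inr ⟨hik, by linarith⟩)
      nlinarith [hfac]
    · have ha1 : M i j ≤ 0 := hoff i j hij
      have ha2 : M i k ≤ 0 := hoff i k hi
      have ha3 : M k j ≤ 0 := hoff k j (Ne.symm hj)
      have hprod : 0 ≤ M i k * M k j := mul_nonneg_iff.2 (Or.inr ⟨ha2, ha3⟩)
      nlinarith [mul_nonneg hc0 hprod]

private lemma main_aux {d : ℕ} (S : Matrix (Fin d) (Fin d) ℝ) (hS : S.PosDef)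
    (hSinv : ∀ j j', j ≠ j' → S⁻¹ j j' ≤ 0) (a : Fin d → ℝ) (ha : ∀ j, 0 ≤ a j)
    (t : Finset (Fin d)) :
    (Matrix.diagonal (fun i => if i ∈ t then a i else 0) + S).PosDef ∧
      ∀ i j, i ≠ j → (Matrix.diagonal (fun i => if i ∈ t then a i else 0) + S)⁻¹ i j ≤ 0 := by
  induction t using Finset.induction_on with
  | empty => simpa using ⟨hS, hSinv⟩
  | @insert k t hk ih =>
    have hfun : (fun i => if i ∈ insert k t then a i else 0)
        = (fun i => (Pi.single k (a k) : Fin d → ℝ) i + (if i ∈ t then a i else 0)) := by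
      funext i
      rcases eq_or_ne i k with rfl | hi
      · simp [hk, Pi.single_apply]
      · simp [hi, Pi.single_apply]
    rw [hfun, ← Matrix.diagonal_add, add_assoc]
    exact sherman_step ih.1 ih.2 k (ha k)

/-- If `S` is symmetric positive definite with the off-diagonal
entries of `S⁻¹` nonpositive, and `Σ_E = diagonal a` with `a j ≥ 0`, then
`Σ_E + S` is invertible and `Ω = (Σ_E + S)⁻¹` has strictly positive diagonal
entries satisfying `a j * Ω j j ≤ 1`, and nonpositive off-diagonal entries. -/
theorem measurement_error_Omega_signs
    (d : ℕ) (S : Matrix (Fin d) (Fin d) ℝ) (hS : S.PosDef)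
    (hSinv : ∀ j j' : Fin d, j ≠ j' → S⁻¹ j j' ≤ 0)
    (a : Fin d → ℝ) (ha : ∀ j, 0 ≤ a j) :
    IsUnit (Matrix.diagonal a + S) ∧
    (∀ j, 0 < (Matrix.diagonal a + S)⁻¹ j j) ∧
    (∀ j, a j * (Matrix.diagonal a + S)⁻¹ j j ≤ 1) ∧
    (∀ j j', j ≠ j' → (Matrix.diagonal a + S)⁻¹ j j' ≤ 0) := by
  have haux := main_aux S hS hSinv a ha Finset.univ
  have hdg : (fun i => if i ∈ (Finset.univ : Finset (Fin d)) then a i else 0) = a := by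
    funext i; simp
  rw [hdg] at haux
  obtain ⟨hpd, hoff⟩ := haux
  have hdiagpos : ∀ j, 0 < (Matrix.diagonal a + S)⁻¹ j j :=
    fun j => posdef_diag_pos hpd.inv j
  refine ⟨hpd.isUnit, hdiagpos, fun j => ?_, fun j j' h => hoff j j' h⟩
  set N : Matrix (Fin d) (Fin d) ℝ := Matrix.diagonal a + S with hN
  set u : Fin d → ℝ := N⁻¹ *ᵥ Pi.single j 1 with hu
  have hNu : N *ᵥ u = Pi.single j 1 := by
    rw [hu, Matrix.mulVec_mulVec, Matrix.mul_nonsing_inv N hpd.det_pos.ne'.isUnit,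
      Matrix.one_mulVec]
  have huj : u j = N⁻¹ j j := by
    simp [hu, Matrix.mulVec, dotProduct, Pi.single_apply]
  have hq : u ⬝ᵥ (N *ᵥ u) = N⁻¹ j j := by
    rw [hNu, dotProduct_single, mul_one, huj]
  have hs : 0 ≤ u ⬝ᵥ (S *ᵥ u) := by
    simpa using hS.posSemidef.dotProduct_mulVec_nonneg u
  have hdg2 : a j * (N⁻¹ j j) ^ 2 ≤ u ⬝ᵥ (Matrix.diagonal a *ᵥ u) := by
    have : u ⬝ᵥ (Matrix.diagonal a *ᵥ u) = ∑ i, a i * (u i) ^ 2 := by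
      simp [dotProduct, Matrix.mulVec_diagonal, mul_comm, sq, mul_assoc, mul_left_comm]
    rw [this, ← huj]
    have := Finset.single_le_sum (f := fun i => a i * (u i) ^ 2)
      (fun i _ => mul_nonneg (ha i) (sq_nonneg _)) (Finset.mem_univ j)
    simpa using this
  have hsplit : u ⬝ᵥ (N *ᵥ u) = u ⬝ᵥ (Matrix.diagonal a *ᵥ u) + u ⬝ᵥ (S *ᵥ u) := by
    rw [hN, Matrix.add_mulVec, dotProduct_add]
  have hsum : N⁻¹ j j = u ⬝ᵥ (Matrix.diagonal a *ᵥ u) + u ⬝ᵥ (S *ᵥ u) := by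
    rw [← hq, hsplit]
  have hineq : a j * (N⁻¹ j j) ^ 2 ≤ N⁻¹ j j := by linarith
  have hpos := hdiagpos j
  nlinarith [hpos, hineq]
end

section
/- Let A be a symmetric positive definite p×p real matrix, C a real p×d matrix, and D, Σ_E real d×d matrices such that the (p+d)×(p+d) block matrix Σ_M with blocks A, C (upper-right), C^T (lower-left), and Σ_E + D (lower-right) is symmetric positive definite. Then Σ_E + D − C^T A^{-1} C is invertible, and for every β_Z ∈ R^p and β_X ∈ R^d, the last d entries of the vector Σ_M^{-1} · E · (β_Z, β_X), where E is the (p+d)×(p+d) block matrix with zero blocks except for −Σ_E in the lower-right d×d block, equal −(Σ_E + D − C^T A^{-1} C)^{-1} Σ_E β_X. -/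
open Matrix

/-- For a symmetric positive definite block matrix
`Σ_M = [[A, C], [Cᵀ, SE + D]]` (with `SE` playing the role of `Σ_E`), the Schur
complement `SE + D - Cᵀ A⁻¹ C` is invertible, and the last `d` entries of
`Σ_M⁻¹ E β` (with `E` the block matrix whose only nonzero block is the
lower-right block `-SE`) equal `-(SE + D - Cᵀ A⁻¹ C)⁻¹ SE βX`. -/
theorem measurement_error_bias_closed_form
    (p d : ℕ) (A : Matrix (Fin p) (Fin p) ℝ)
    (C : Matrix (Fin p) (Fin d) ℝ) (D SE : Matrix (Fin d) (Fin d) ℝ)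
    (hSM : (Matrix.fromBlocks A C Cᵀ (SE + D)).PosDef) :
    IsUnit (SE + D - Cᵀ * A⁻¹ * C) ∧
    ∀ (βZ : Fin p → ℝ) (βX : Fin d → ℝ) (j : Fin d),
      ((Matrix.fromBlocks A C Cᵀ (SE + D))⁻¹).mulVec
          ((Matrix.fromBlocks (0 : Matrix (Fin p) (Fin p) ℝ)
              (0 : Matrix (Fin p) (Fin d) ℝ) (0 : Matrix (Fin d) (Fin p) ℝ)
              (-SE)).mulVec (Sum.elim βZ βX)) (Sum.inr j)
        = (-(((SE + D - Cᵀ * A⁻¹ * C)⁻¹ * SE).mulVec βX)) j := by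
  have hA : A.PosDef := by
    refine posDef_iff_dotProduct_mulVec.mpr ⟨?_, ?_⟩
    · have h := hSM.1
      ext i j
      simpa using congrFun (congrFun h (Sum.inl i)) (Sum.inl j)
    · intro x hx
      have hx' : (Sum.elim x 0 : Fin p ⊕ Fin d → ℝ) ≠ 0 := by
        intro h
        apply hx
        ext i
        exact congrFun h (Sum.inl i)
      have := hSM.dotProduct_mulVec_pos hx'
      simpa [fromBlocks_mulVec, dotProduct, Fintype.sum_sum_type] using this
  letI : Invertible A := hA.isUnit.invertible
  letI : Invertible (fromBlocks A C Cᵀ (SE + D)) := hSM.isUnit.invertible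
  letI iS : Invertible (SE + D - Cᵀ * ⅟A * C) :=
    invertibleOfFromBlocks₁₁Invertible A C Cᵀ (SE + D)
  have hSeq : Cᵀ * ⅟A * C = Cᵀ * A⁻¹ * C := by rw [invOf_eq_nonsing_inv]
  have hUnit : IsUnit (SE + D - Cᵀ * A⁻¹ * C) := by
    rw [← hSeq]; exact isUnit_of_invertible _
  refine ⟨hUnit, fun βZ βX j => ?_⟩
  have hinv : (fromBlocks A C Cᵀ (SE + D))⁻¹ =
      fromBlocks (⅟A + ⅟A * C * ⅟(SE + D - Cᵀ * ⅟A * C) * Cᵀ * ⅟A)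
        (-(⅟A * C * ⅟(SE + D - Cᵀ * ⅟A * C)))
        (-(⅟(SE + D - Cᵀ * ⅟A * C) * Cᵀ * ⅟A)) (⅟(SE + D - Cᵀ * ⅟A * C)) := by
    rw [← invOf_eq_nonsing_inv, invOf_fromBlocks₁₁_eq]
  have hE : (fromBlocks (0 : Matrix (Fin p) (Fin p) ℝ)
      (0 : Matrix (Fin p) (Fin d) ℝ) (0 : Matrix (Fin d) (Fin p) ℝ)
      (-SE)).mulVec (Sum.elim βZ βX) = Sum.elim (0 : Fin p → ℝ) (-(SE.mulVec βX)) := by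
    rw [fromBlocks_mulVec]
    simp [Matrix.neg_mulVec]
  rw [hE, hinv, fromBlocks_mulVec]
  have hS' : ⅟(SE + D - Cᵀ * ⅟A * C) = (SE + D - Cᵀ * A⁻¹ * C)⁻¹ := by
    rw [invOf_eq_nonsing_inv, hSeq]
  simp [hS', ← mulVec_mulVec, Matrix.mulVec_neg]
end

section
/- Let S be a symmetric positive definite d×d real matrix such that every off-diagonal entry of S^{-1} is nonpositive, let Σ_E = diag(a_1,…,a_d) with a_j ≥ 0 for all j, and let Ω = (Σ_E + S)^{-1}. Let β_X ∈ R^d have all entries nonpositive. If a_j = 0 for some index j, then the j-th entry of the measurement error bias vector −Ω Σ_E β_X is nonpositive. -/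
open Matrix

lemma posdef_diag_pos_s4 {d : ℕ} {A : Matrix (Fin d) (Fin d) ℝ} (hA : A.PosDef) (k : Fin d) :
    0 < A k k := by
  exact hA.diag_pos

lemma sm_step {d : ℕ} (A : Matrix (Fin d) (Fin d) ℝ) (hA : A.PosDef)
    (hoff : ∀ i j : Fin d, i ≠ j → A⁻¹ i j ≤ 0) (c : ℝ) (hc : 0 ≤ c) (k : Fin d) :
    (A + Matrix.diagonal (Pi.single k c)).PosDef ∧
      ∀ i j : Fin d, i ≠ j → (A + Matrix.diagonal (Pi.single k c))⁻¹ i j ≤ 0 := by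
  set B := A⁻¹ with hB
  have hBpd : B.PosDef := hA.inv
  have hBkk : 0 < B k k := posdef_diag_pos_s4 hBpd k
  set denom : ℝ := 1 + c * B k k with hden
  have hdenpos : 0 < denom := by positivity
  have hdne : denom ≠ 0 := ne_of_gt hdenpos
  set D : Matrix (Fin d) (Fin d) ℝ := Matrix.diagonal (Pi.single k c) with hD
  have hPD : (A + D).PosDef := by
    refine hA.add_posSemidef (Matrix.posSemidef_diagonal_iff.mpr ?_)
    intro i
    by_cases h : i = k <;> simp [Pi.single_apply, h, hc]
  refine ⟨hPD, ?_⟩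
  have hAB : A * B = 1 := Matrix.mul_nonsing_inv A (isUnit_iff_ne_zero.mpr hA.det_pos.ne')
  -- candidate inverse
  set C : Matrix (Fin d) (Fin d) ℝ := B - (denom⁻¹) • (B * D * B) with hC
  have hDBD : D * B * D = (c * B k k) • D := by
    ext i j
    simp only [hD, Matrix.mul_apply, Matrix.diagonal_apply, Pi.single_apply, Matrix.smul_apply,
      smul_eq_mul]
    by_cases hik : i = k <;> by_cases hjk : j = k <;>
      simp [hik, hjk, Ne.symm, Finset.sum_ite_eq', Finset.sum_ite_eq, mul_comm, mul_left_comm, mul_assoc, eq_comm]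
  have hDBmul : (A + D) * (B * D * B) = denom • (D * B) := by
    have assoc1 : (A + D) * (B * D * B) = A * B * (D * B) + D * B * D * B := by
      noncomm_ring
    rw [assoc1, hAB, hDBD, Matrix.one_mul, Matrix.smul_mul]
    rw [hden, add_smul, one_smul]
  have hmul : (A + D) * C = 1 := by
    rw [hC, Matrix.mul_sub, Matrix.add_mul, hAB, Matrix.mul_smul, hDBmul, smul_smul,
      inv_mul_cancel₀ hdne, one_smul, add_sub_cancel_right]
  have hinv : (A + D)⁻¹ = C := Matrix.inv_eq_right_inv hmul
  intro i j hij
  have hBDl : ∀ l : Fin d, (B * D) i l = B i l * (Pi.single k c : Fin d → ℝ) l := by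
    intro l; simp [hD, Matrix.mul_diagonal]
  have hBDB : (B * D * B) i j = c * (B i k * B k j) := by
    rw [Matrix.mul_apply, Finset.sum_eq_single k]
    · rw [hBDl]; simp; ring
    · intro b _ hbk; rw [hBDl]; simp [Pi.single_apply, hbk]
    · simp
  have hCij : C i j = B i j - denom⁻¹ * (c * (B i k * B k j)) := by
    simp only [hC, Matrix.sub_apply, Matrix.smul_apply, smul_eq_mul, hBDB]
  rw [hinv, hCij]
  by_cases hik : i = k
  · rw [hik]
    have h1 : B k j ≤ 0 := hoff _ _ (hik ▸ hij)
    have : B k j - denom⁻¹ * (c * (B k k * B k j)) = B k j * (1 - denom⁻¹ * c * B k k) := by ring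
    rw [this]
    have : 1 - denom⁻¹ * c * B k k = denom⁻¹ := by field_simp [hden]; linarith [hden]
    rw [this]
    exact mul_nonpos_of_nonpos_of_nonneg h1 (by positivity)
  · by_cases hjk : j = k
    · rw [hjk]
      have h1 : B i k ≤ 0 := hoff _ _ (fun h => hik h)
      have e1 : B i k - denom⁻¹ * (c * (B i k * B k k)) = B i k * (1 - denom⁻¹ * c * B k k) := by
        ring
      rw [e1]
      have e2 : 1 - denom⁻¹ * c * B k k = denom⁻¹ := by field_simp [hden]; linarith [hden]
      rw [e2]
      exact mul_nonpos_of_nonpos_of_nonneg h1 (by positivity)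
    · have h1 : B i j ≤ 0 := hoff _ _ hij
      have h2 : B i k ≤ 0 := hoff _ _ hik
      have h3 : B k j ≤ 0 := hoff _ _ (fun h => hjk h.symm)
      have : 0 ≤ denom⁻¹ * (c * (B i k * B k j)) := by
        have h4 : 0 ≤ B i k * B k j := by
          have := mul_nonneg (neg_nonneg.mpr h2) (neg_nonneg.mpr h3)
          rwa [neg_mul_neg] at this
        positivity
      linarith

lemma sm_induct {d : ℕ} (S : Matrix (Fin d) (Fin d) ℝ) (hS : S.PosDef)
    (hSinv : ∀ j j' : Fin d, j ≠ j' → S⁻¹ j j' ≤ 0)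
    (a : Fin d → ℝ) (ha : ∀ j, 0 ≤ a j) (m : ℕ) :
    (S + Matrix.diagonal (fun i : Fin d => if (i : ℕ) < m then a i else 0)).PosDef ∧
      ∀ i j : Fin d, i ≠ j →
        (S + Matrix.diagonal (fun i : Fin d => if (i : ℕ) < m then a i else 0))⁻¹ i j ≤ 0 := by
  induction m with
  | zero =>
    have : (fun i : Fin d => if (i : ℕ) < 0 then a i else 0) = fun _ => (0 : ℝ) := by
      funext i; simp
    rw [this]
    simpa [Matrix.diagonal_zero] using ⟨hS, hSinv⟩
  | succ m ih =>
    by_cases hm : m < d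
    · have key : (fun i : Fin d => if (i : ℕ) < m + 1 then a i else 0)
          = fun i : Fin d => (if (i : ℕ) < m then a i else 0)
            + (Pi.single (⟨m, hm⟩ : Fin d) (a ⟨m, hm⟩) : Fin d → ℝ) i := by
        funext i
        simp only [Pi.single_apply]
        rcases lt_trichotomy (i : ℕ) m with h | h | h
        · have h1 : (i : ℕ) < m + 1 := by omega
          have h2 : i ≠ (⟨m, hm⟩ : Fin d) := by
            intro he; rw [he] at h; simp at h
          simp [h, h1, h2]
        · have h1 : i = (⟨m, hm⟩ : Fin d) := by
            apply Fin.ext; simpa using h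
          simp [h1, h]
        · have h1 : ¬ (i : ℕ) < m + 1 := by omega
          have h2 : i ≠ (⟨m, hm⟩ : Fin d) := by
            intro he; rw [he] at h; simp at h
          simp [h1, h2, not_lt_of_gt h]
      rw [key, ← Matrix.diagonal_add, ← add_assoc]
      exact sm_step _ ih.1 ih.2 (a ⟨m, hm⟩) (ha _) ⟨m, hm⟩
    · have : (fun i : Fin d => if (i : ℕ) < m + 1 then a i else 0)
          = (fun i : Fin d => if (i : ℕ) < m then a i else 0) := by
        funext i
        have : (i : ℕ) < m ∧ (i : ℕ) < m + 1 := ⟨by omega, by omega⟩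
        simp [this.1, this.2]
      rw [this]; exact ih

/-- Perfectly measured pollutants have nonpositive measurement
error bias: if `S` is symmetric positive definite with nonpositive off-diagonal
entries of `S⁻¹`, `Σ_E = diagonal a` with `a ≥ 0`, `βX ≤ 0` entrywise, and
`a j = 0`, then the `j`-th entry of `-Ω Σ_E βX` (with `Ω = (Σ_E + S)⁻¹`) is
nonpositive. -/
theorem perfectly_measured_bias_nonpos
    (d : ℕ) (S : Matrix (Fin d) (Fin d) ℝ) (hS : S.PosDef)
    (hSinv : ∀ j j' : Fin d, j ≠ j' → S⁻¹ j j' ≤ 0)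
    (a : Fin d → ℝ) (ha : ∀ j, 0 ≤ a j)
    (βX : Fin d → ℝ) (hβX : ∀ j, βX j ≤ 0)
    (j : Fin d) (haj : a j = 0) :
    (-(((Matrix.diagonal a + S)⁻¹ * Matrix.diagonal a).mulVec βX)) j ≤ 0 := by
  have h := sm_induct S hS hSinv a ha d
  have hfun : (fun i : Fin d => if (i : ℕ) < d then a i else 0) = a := by
    funext i; simp [i.isLt]
  rw [hfun] at h
  have hcomm : Matrix.diagonal a + S = S + Matrix.diagonal a := add_comm _ _
  have hoff : ∀ i k : Fin d, i ≠ k → (Matrix.diagonal a + S)⁻¹ i k ≤ 0 := by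
    rw [hcomm]; exact h.2
  set Ω := (Matrix.diagonal a + S)⁻¹ with hΩ
  have hterm : ∀ k : Fin d, 0 ≤ Ω j k * a k * βX k := by
    intro k
    rcases eq_or_ne k j with rfl | hkj
    · simp [haj]
    · have h1 : Ω j k ≤ 0 := hoff j k (fun he => hkj he.symm)
      have h2 : Ω j k * a k ≤ 0 := mul_nonpos_of_nonpos_of_nonneg h1 (ha k)
      have := mul_nonneg (neg_nonneg.mpr h2) (neg_nonneg.mpr (hβX k))
      rwa [neg_mul_neg] at this
  simp only [Pi.neg_apply, neg_nonpos]
  rw [Matrix.mulVec, dotProduct]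
  refine Finset.sum_nonneg fun k _ => ?_
  rw [Matrix.mul_diagonal]
  exact hterm k
end

section
/- Let A be a p×p real matrix, B, C real p×d matrices, and F, G real d×d matrices, such that the (p+d)×(p+d) block matrix Σ_M with blocks A, C (upper-right), C^T (lower-left), and G (lower-right) is symmetric positive definite. Then G and A − C G^{-1} C^T are invertible, and for every β_Z ∈ R^p and β_X ∈ R^d, the first p entries of the vector Σ_M^{-1} · Σ_{M,E} · (β_Z, β_X), where Σ_{M,E} is the (p+d)×(p+d) block matrix with upper-left p×p block zero, upper-right block B − C, lower-left block zero, and lower-right block F^T − G, equal (A − C G^{-1} C^T)^{-1} (B − C G^{-1} F^T) β_X. -/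
open Matrix

lemma posDef_block_lower {p d : ℕ} {A : Matrix (Fin p) (Fin p) ℝ}
    {C : Matrix (Fin p) (Fin d) ℝ} {G : Matrix (Fin d) (Fin d) ℝ}
    (hSM : (Matrix.fromBlocks A C Cᵀ G).PosDef) : G.PosDef := by
  refine Matrix.PosDef.of_dotProduct_mulVec_pos ?_ ?_
  · have h := hSM.1
    rw [Matrix.IsHermitian, Matrix.conjTranspose_eq_transpose_of_trivial] at h ⊢
    ext i j
    have := congrFun (congrFun h (Sum.inr i)) (Sum.inr j)
    simpa using this
  · intro x hx
    have hy : (Sum.elim (0 : Fin p → ℝ) x) ≠ 0 := by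
      intro h
      apply hx
      ext i
      exact congrFun h (Sum.inr i)
    have := hSM.dotProduct_mulVec_pos hy
    simpa [Matrix.fromBlocks_mulVec, sumElim_dotProduct_sumElim] using this

/-- General measurement error bias formula for the coefficients
of the perfectly measured covariates: if `Σ_M = [[A, C], [Cᵀ, G]]` is symmetric
positive definite, then `G` and `A - C G⁻¹ Cᵀ` are invertible, and the first `p`
entries of `Σ_M⁻¹ Σ_{M,E} β` (with `Σ_{M,E}` the block matrix with blocks
`0, B - C, 0, Fᵀ - G`) equal `(A - C G⁻¹ Cᵀ)⁻¹ (B - C G⁻¹ Fᵀ) βX`. -/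
theorem measurement_error_bias_Z_closed_form
    (p d : ℕ) (A : Matrix (Fin p) (Fin p) ℝ)
    (B C : Matrix (Fin p) (Fin d) ℝ) (F G : Matrix (Fin d) (Fin d) ℝ)
    (hSM : (Matrix.fromBlocks A C Cᵀ G).PosDef) :
    IsUnit G ∧ IsUnit (A - C * G⁻¹ * Cᵀ) ∧
    ∀ (βZ : Fin p → ℝ) (βX : Fin d → ℝ) (k : Fin p),
      ((Matrix.fromBlocks A C Cᵀ G)⁻¹).mulVec
          ((Matrix.fromBlocks (0 : Matrix (Fin p) (Fin p) ℝ) (B - C)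
              (0 : Matrix (Fin d) (Fin p) ℝ) (Fᵀ - G)).mulVec
            (Sum.elim βZ βX)) (Sum.inl k)
        = ((A - C * G⁻¹ * Cᵀ)⁻¹ * (B - C * G⁻¹ * Fᵀ)).mulVec βX k := by
  have hG : G.PosDef := posDef_block_lower hSM
  haveI instG : Invertible G := hG.isUnit.invertible
  haveI instM : Invertible (Matrix.fromBlocks A C Cᵀ G) := hSM.isUnit.invertible
  haveI instS : Invertible (A - C * ⅟G * Cᵀ) :=
    Matrix.invertibleOfFromBlocks₂₂Invertible A C Cᵀ G
  have hginv : ⅟G = G⁻¹ := Matrix.invOf_eq_nonsing_inv G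
  have hS' : IsUnit (A - C * G⁻¹ * Cᵀ) := by
    rw [← hginv]; exact isUnit_of_invertible _
  refine ⟨hG.isUnit, hS', ?_⟩
  intro βZ βX k
  set S : Matrix (Fin p) (Fin p) ℝ := A - C * G⁻¹ * Cᵀ with hSdef
  haveI instS' : Invertible S := by rw [hSdef, ← hginv]; exact instS
  have hGG : G⁻¹ * G = 1 :=
    Matrix.nonsing_inv_mul G ((Matrix.isUnit_iff_isUnit_det G).mp hG.isUnit)
  have hinv : (Matrix.fromBlocks A C Cᵀ G)⁻¹
      = Matrix.fromBlocks S⁻¹ (-(S⁻¹ * C * G⁻¹)) (-(G⁻¹ * Cᵀ * S⁻¹))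
          (G⁻¹ + G⁻¹ * Cᵀ * S⁻¹ * C * G⁻¹) := by
    rw [← Matrix.invOf_eq_nonsing_inv (Matrix.fromBlocks A C Cᵀ G),
      Matrix.invOf_fromBlocks₂₂_eq, Matrix.invOf_eq_nonsing_inv (A - C * ⅟G * Cᵀ),
      Matrix.invOf_eq_nonsing_inv G, ← hSdef]
  rw [hinv, Matrix.fromBlocks_mulVec, Matrix.fromBlocks_mulVec]
  simp only [Matrix.zero_mulVec, zero_add, Sum.elim_inl, Sum.elim_inr]
  have key : S⁻¹.mulVec ((B - C).mulVec βX)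
      + (-(S⁻¹ * C * G⁻¹)).mulVec ((Fᵀ - G).mulVec βX)
      = (S⁻¹ * (B - C * G⁻¹ * Fᵀ)).mulVec βX := by
    rw [Matrix.mulVec_mulVec, Matrix.mulVec_mulVec, ← Matrix.add_mulVec]
    congr 1
    simp only [Matrix.mul_sub, Matrix.sub_mul, Matrix.neg_mul, Matrix.mul_assoc, hGG,
      Matrix.mul_one]
    abel
  have := congrFun key k
  simpa using this
end

section
/- Let p ≥ 1 and d = 1. Let A be a symmetric positive definite p×p real matrix, B ∈ R^p, σ_X > 0, σ_W > 0, ρ ∈ [−1, 1], and β_X ∈ R. Define C = (σ_W ρ / σ_X) B ∈ R^p, F = σ_X σ_W ρ, G = σ_W². Assume σ_X² − B^T A^{-1} B > 0. Then A − C G^{-1} C^T is invertible and the measurement error bias (A − C G^{-1} C^T)^{-1}(B − C G^{-1} F) β_X equals ϱ · A^{-1} B β_X, where ϱ = 1 if ρ = 0 and ϱ = (1 − ρ²)·(1 + (B^T A^{-1} B)/(σ_X²/ρ² − B^T A^{-1} B)) otherwise; moreover ϱ ∈ [0, 1) whenever ρ ≠ 0. In particular the measurement error bias of the coefficient of Z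 has the same sign, entrywise, as the omitted variable bias A^{-1} B β_X, and is entrywise no larger in absolute value. -/
open Matrix

private lemma mul_vecMulVec' {p : ℕ} (M : Matrix (Fin p) (Fin p) ℝ) (u v : Fin p → ℝ) :
    M * vecMulVec u v = vecMulVec (M *ᵥ u) v := by
  ext i j
  simp only [Matrix.mul_apply, vecMulVec_apply, Matrix.mulVec, dotProduct, Finset.sum_mul]
  exact Finset.sum_congr rfl fun k _ => by ring

private lemma vecMulVec_mul' {p : ℕ} (M : Matrix (Fin p) (Fin p) ℝ) (u v : Fin p → ℝ) :
    vecMulVec u v * M = vecMulVec u (v ᵥ* M) := by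
  ext i j
  simp only [Matrix.mul_apply, vecMulVec_apply, Matrix.vecMul, dotProduct, Finset.mul_sum]
  exact Finset.sum_congr rfl fun k _ => by ring

private lemma vecMulVec_mulVec' {p : ℕ} (u v w : Fin p → ℝ) :
    vecMulVec u v *ᵥ w = (v ⬝ᵥ w) • u := by
  ext i
  simp only [Matrix.mulVec, vecMulVec_apply, dotProduct, Pi.smul_apply, smul_eq_mul,
    Finset.sum_mul]
  exact Finset.sum_congr rfl fun k _ => by ring

private lemma vecMulVec_mul_vecMulVec' {p : ℕ} (u v w x : Fin p → ℝ) :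
    vecMulVec u v * vecMulVec w x = (v ⬝ᵥ w) • vecMulVec u x := by
  ext i j
  simp only [Matrix.mul_apply, vecMulVec_apply, dotProduct, Matrix.smul_apply, smul_eq_mul,
    Finset.sum_mul]
  exact Finset.sum_congr rfl fun k _ => by ring

set_option maxHeartbeats 1000000 in
/-- Case `d = 1` with zero partial correlation of `W` and `Z`
given `X`: with `C = (σW ρ / σX) B`, `F = σX σW ρ`, `G = σW²`, the measurement
error bias equals `ϱ · A⁻¹ B βX` with `ϱ = 1` if `ρ = 0` and
`ϱ = (1 - ρ²)(1 + (BᵀA⁻¹B)/(σX²/ρ² - BᵀA⁻¹B)) ∈ [0, 1)` otherwise; in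
particular it has the same sign entrywise as the omitted variable bias
`A⁻¹ B βX` and is entrywise no larger in absolute value. -/
theorem meb_vs_ovb_single_error_prone
    (p : ℕ) (hp : 1 ≤ p)
    (A : Matrix (Fin p) (Fin p) ℝ) (hA : A.PosDef)
    (B : Fin p → ℝ) (σX σW ρ βX : ℝ)
    (hσX : 0 < σX) (hσW : 0 < σW) (hρ : ρ ∈ Set.Icc (-1 : ℝ) 1)
    (C : Fin p → ℝ) (hC : C = fun i => σW * ρ / σX * B i)
    (F : ℝ) (hF : F = σX * σW * ρ)
    (G : ℝ) (hG : G = σW ^ 2)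
    (hpd : 0 < σX ^ 2 - B ⬝ᵥ A⁻¹.mulVec B)
    (ϱ : ℝ)
    (hϱ : ϱ = if ρ = 0 then 1 else
      (1 - ρ ^ 2) * (1 + (B ⬝ᵥ A⁻¹.mulVec B) /
        (σX ^ 2 / ρ ^ 2 - B ⬝ᵥ A⁻¹.mulVec B))) :
    IsUnit (A - (1 / G) • Matrix.vecMulVec C C) ∧
    ((A - (1 / G) • Matrix.vecMulVec C C)⁻¹.mulVec
        (fun i => (B i - C i * (1 / G) * F) * βX)
      = fun i => ϱ * (A⁻¹.mulVec B i * βX)) ∧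
    (ρ ≠ 0 → ϱ ∈ Set.Ico (0 : ℝ) 1) ∧
    (∀ i,
      0 ≤ (A - (1 / G) • Matrix.vecMulVec C C)⁻¹.mulVec
            (fun i' => (B i' - C i' * (1 / G) * F) * βX) i
          * (A⁻¹.mulVec B i * βX) ∧
      |(A - (1 / G) • Matrix.vecMulVec C C)⁻¹.mulVec
          (fun i' => (B i' - C i' * (1 / G) * F) * βX) i|
        ≤ |A⁻¹.mulVec B i * βX|) := by
  have hσX2 : (0:ℝ) < σX ^ 2 := by positivity
  set s : ℝ := B ⬝ᵥ A⁻¹.mulVec B with hs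
  set t : ℝ := ρ ^ 2 / σX ^ 2 with ht
  set u : Fin p → ℝ := A⁻¹ *ᵥ B with hu
  have hdet : IsUnit A.det := (Matrix.isUnit_iff_isUnit_det A).mp hA.isUnit
  have hAA : A * A⁻¹ = 1 := A.mul_nonsing_inv hdet
  have hA1A : A⁻¹ * A = 1 := A.nonsing_inv_mul hdet
  have hs0 : 0 ≤ s := by
    have := hA.inv.posSemidef.dotProduct_mulVec_nonneg B
    simpa using this
  have hρ2 : ρ ^ 2 ≤ 1 := by
    rcases hρ with ⟨h1, h2⟩
    nlinarith
  have hts : t * s < 1 := by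
    rw [ht, div_mul_eq_mul_div, div_lt_one hσX2]
    nlinarith
  have ht0 : 0 ≤ t := by positivity
  have hc : 0 < 1 - t * s := by linarith
  have hATA : Aᵀ = A := by
    have := hA.isHermitian
    rwa [Matrix.IsHermitian, Matrix.conjTranspose_eq_transpose_of_trivial] at this
  have hsym : A⁻¹ᵀ = A⁻¹ := by rw [Matrix.transpose_nonsing_inv, hATA]
  -- rewrite the matrix and the vector
  have hkey : (1 / G) • Matrix.vecMulVec C C = t • Matrix.vecMulVec B B := by
    ext i j
    simp only [Matrix.smul_apply, vecMulVec_apply, hC, hG, ht, smul_eq_mul]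
    field_simp
  have hvec : (fun i => (B i - C i * (1 / G) * F) * βX)
      = ((1 - ρ ^ 2) * βX) • B := by
    funext i
    simp only [hC, hG, hF, Pi.smul_apply, smul_eq_mul]
    field_simp
  set M : Matrix (Fin p) (Fin p) ℝ := A - t • Matrix.vecMulVec B B with hM
  have hMeq : A - (1 / G) • Matrix.vecMulVec C C = M := by rw [hkey]
  set N : Matrix (Fin p) (Fin p) ℝ :=
    A⁻¹ + (t / (1 - t * s)) • Matrix.vecMulVec u u with hN
  have hAu : A *ᵥ u = B := by
    rw [hu, Matrix.mulVec_mulVec, hAA, Matrix.one_mulVec]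
  have hBu : B ᵥ* A⁻¹ = u := by
    calc B ᵥ* A⁻¹ = B ᵥ* (A⁻¹ᵀ)ᵀ := by rw [Matrix.transpose_transpose]
    _ = A⁻¹ᵀ *ᵥ B := by rw [Matrix.vecMul_transpose]
    _ = u := by rw [hsym]
  have hdot : B ⬝ᵥ u = s := rfl
  have h1 : A * N = 1 + (t / (1 - t * s)) • vecMulVec B u := by
    rw [hN, Matrix.mul_add, hAA, Matrix.mul_smul, mul_vecMulVec', hAu]
  have h2 : vecMulVec B B * N
      = vecMulVec B u + ((t / (1 - t * s)) * s) • vecMulVec B u := by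
    rw [hN, Matrix.mul_add, vecMulVec_mul', hBu, Matrix.mul_smul,
      vecMulVec_mul_vecMulVec', hdot, smul_smul]
  have hcoef : t / (1 - t * s) = t + t * ((t / (1 - t * s)) * s) := by
    field_simp
    ring
  have hMN : M * N = 1 := by
    calc M * N = A * N - t • (vecMulVec B B * N) := by
          rw [hM, Matrix.sub_mul, Matrix.smul_mul]
    _ = 1 + (t / (1 - t * s)) • vecMulVec B u
        - t • (vecMulVec B u + ((t / (1 - t * s)) * s) • vecMulVec B u) := by
          rw [h1, h2]
    _ = 1 + (t / (1 - t * s)) • vecMulVec B u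
        - (t + t * ((t / (1 - t * s)) * s)) • vecMulVec B u := by
          rw [smul_add, smul_smul, add_smul]
    _ = 1 := by rw [← hcoef, add_sub_cancel_right]
  have hMunit : IsUnit M := by
    have := invertibleOfRightInverse (h := hMN)
    exact isUnit_of_invertible M
  have hMinv : M⁻¹ = N := Matrix.inv_eq_right_inv hMN
  have huB : u ⬝ᵥ B = s := by rw [dotProduct_comm]
  have hNv : N *ᵥ (((1 - ρ ^ 2) * βX) • B)
      = ((1 - ρ ^ 2) / (1 - t * s) * βX) • u := by
    rw [hN, Matrix.add_mulVec, Matrix.mulVec_smul, Matrix.smul_mulVec,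
      Matrix.mulVec_smul, vecMulVec_mulVec', huB, ← hu, smul_smul, smul_smul, ← add_smul]
    congr 1
    field_simp
    ring
  have hϱ' : ϱ = (1 - ρ ^ 2) / (1 - t * s) := by
    by_cases hρ0 : ρ = 0
    · simp [hϱ, hρ0, ht]
    · have hρ2pos : 0 < ρ ^ 2 := by positivity
      have hden : 0 < σX ^ 2 / ρ ^ 2 - s := by
        have : σX ^ 2 ≤ σX ^ 2 / ρ ^ 2 := by
          rw [le_div_iff₀ hρ2pos]; nlinarith
        linarith
      have hD : σX ^ 2 - ρ ^ 2 * s ≠ 0 := by nlinarith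
      rw [hϱ, if_neg hρ0, ht]
      field_simp [hD]
      ring
  have hmain : (A - (1 / G) • Matrix.vecMulVec C C)⁻¹.mulVec
      (fun i => (B i - C i * (1 / G) * F) * βX)
      = fun i => ϱ * (A⁻¹.mulVec B i * βX) := by
    rw [hMeq, hvec, hMinv, hNv, hϱ']
    funext i
    simp only [Pi.smul_apply, smul_eq_mul, hu]
    ring
  have hϱIco : ρ ≠ 0 → ϱ ∈ Set.Ico (0 : ℝ) 1 := by
    intro hρ0
    have hρ2pos : 0 < ρ ^ 2 := by positivity
    constructor
    · rw [hϱ']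
      apply div_nonneg (by linarith) hc.le
    · rw [hϱ', div_lt_one hc]
      have : t * s < ρ ^ 2 := by
        rw [ht, div_mul_eq_mul_div, div_lt_iff₀ hσX2]
        nlinarith
      linarith
  have hϱ01 : 0 ≤ ϱ ∧ ϱ ≤ 1 := by
    by_cases hρ0 : ρ = 0
    · simp [hϱ, hρ0]
    · obtain ⟨h1', h2'⟩ := hϱIco hρ0
      exact ⟨h1', h2'.le⟩
  refine ⟨by rw [hMeq]; exact hMunit, hmain, hϱIco, fun i => ?_⟩
  rw [hmain]
  constructor
  · nlinarith [hϱ01.1, sq_nonneg (A⁻¹.mulVec B i * βX)]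
  · rw [abs_mul, abs_of_nonneg hϱ01.1]
    exact mul_le_of_le_one_left (abs_nonneg _) hϱ01.2
end

section
/- Let p = d = 1 and let σ_Z, σ_X > 0, β_X ∈ R, and correlations ρ_ZX, ρ_ZW, ρ_XW ∈ [−1, 1] satisfy: ρ_XW > |ρ_ZW| > 0, |ρ_ZX| ≥ |ρ_ZW|, and ρ_ZW and ρ_ZX have the same sign. Define the measurement error bias MEB = β_X σ_X (ρ_ZX − ρ_ZW ρ_XW) / (σ_Z (1 − ρ_ZW²)) and the omitted variable bias OVB = β_X σ_X ρ_ZX / σ_Z. Then MEB and OVB have the same sign, |MEB| ≤ |OVB|, and |MEB| = |OVB| if and only if OVB = 0. -/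
/-- Case `p = d = 1`: under `ρ_XW > |ρ_ZW| > 0`,
`|ρ_ZX| ≥ |ρ_ZW|`, and `ρ_ZW, ρ_ZX` of the same sign, the measurement error
bias `MEB = βX σX (ρZX - ρZW ρXW) / (σZ (1 - ρZW²))` and the omitted variable
bias `OVB = βX σX ρZX / σZ` have the same sign, `|MEB| ≤ |OVB|`, with equality
if and only if `OVB = 0`. -/
theorem meb_vs_ovb_scalar_case
    (σZ σX βX ρZX ρZW ρXW : ℝ)
    (hσZ : 0 < σZ) (hσX : 0 < σX)
    (hρZX : ρZX ∈ Set.Icc (-1 : ℝ) 1)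
    (hρZW : ρZW ∈ Set.Icc (-1 : ℝ) 1)
    (hρXW : ρXW ∈ Set.Icc (-1 : ℝ) 1)
    (h1 : |ρZW| < ρXW) (h2 : 0 < |ρZW|) (h3 : |ρZW| ≤ |ρZX|)
    (hsign : 0 < ρZW * ρZX)
    (MEB OVB : ℝ)
    (hMEB : MEB = βX * σX * (ρZX - ρZW * ρXW) / (σZ * (1 - ρZW ^ 2)))
    (hOVB : OVB = βX * σX * ρZX / σZ) :
    (0 ≤ OVB → 0 ≤ MEB) ∧ (OVB ≤ 0 → MEB ≤ 0) ∧
    |MEB| ≤ |OVB| ∧ (|MEB| = |OVB| ↔ OVB = 0) := by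
  have hZWlt1 : |ρZW| < 1 := lt_of_lt_of_le h1 hρXW.2
  have hD : 0 < 1 - ρZW ^ 2 := by nlinarith [sq_abs ρZW, abs_nonneg ρZW]
  have hZXne : ρZX ≠ 0 := by
    intro h; rw [h, mul_zero] at hsign; exact lt_irrefl 0 hsign
  have h4 : ρZX * ρZW ≤ ρZX ^ 2 := by
    calc ρZX * ρZW ≤ |ρZX * ρZW| := le_abs_self _
      _ = |ρZX| * |ρZW| := abs_mul _ _
      _ ≤ |ρZX| * |ρZX| := mul_le_mul_of_nonneg_left h3 (abs_nonneg _)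
      _ = ρZX ^ 2 := by rw [← abs_mul, abs_mul_self, sq]
  have h5 : ρZX * ρZW < ρXW := by
    calc ρZX * ρZW ≤ |ρZX * ρZW| := le_abs_self _
      _ = |ρZX| * |ρZW| := abs_mul _ _
      _ ≤ 1 * |ρZW| := mul_le_mul_of_nonneg_right (abs_le.mpr hρZX) (abs_nonneg _)
      _ = |ρZW| := one_mul _
      _ < ρXW := h1
  have hsign' : 0 < ρZX * ρZW := by linarith [mul_comm ρZW ρZX, hsign]
  have ha : 0 ≤ ρZX * (ρZX - ρZW * ρXW) := by nlinarith [hρXW.2, hsign']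
  have hb : ρZX * (ρZX - ρZW * ρXW) < ρZX ^ 2 * (1 - ρZW ^ 2) := by nlinarith [hsign', h5]
  set t : ℝ := ρZX * (ρZX - ρZW * ρXW) / (ρZX ^ 2 * (1 - ρZW ^ 2)) with ht
  have hden : 0 < ρZX ^ 2 * (1 - ρZW ^ 2) := by positivity
  have ht0 : 0 ≤ t := div_nonneg ha hden.le
  have ht1 : t < 1 := (div_lt_one hden).mpr hb
  have hMt : MEB = OVB * t := by
    rw [hMEB, hOVB, ht]
    field_simp
  refine ⟨?_, ?_, ?_, ?_, ?_⟩
  · intro h; rw [hMt]; exact mul_nonneg h ht0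
  · intro h; rw [hMt]; exact mul_nonpos_of_nonpos_of_nonneg h ht0
  · rw [hMt, abs_mul, abs_of_nonneg ht0]
    exact mul_le_of_le_one_right (abs_nonneg _) ht1.le
  · intro h
    rw [hMt, abs_mul, abs_of_nonneg ht0] at h
    have : |OVB| = 0 := by nlinarith [abs_nonneg OVB]
    exact abs_eq_zero.mp this
  · intro h; rw [hMt, h, zero_mul]
end

section
/- Let the (p+d)×(p+d) block matrix with blocks A (p×p), B (upper-right p×d), B^T, and D (d×d) be symmetric positive definite, and fix β_X ∈ R^d. Then for every symmetric positive semidefinite d×d matrix Σ_E, the matrices D + Σ_E and A − B (D + Σ_E)^{-1} B^T are invertible; and for every sequence (Σ_E^{(n)}) of symmetric positive semidefinite d×d matrices whose smallest eigenvalues tend to +∞, the measurement error bias vectors (A − B (D + Σ_E^{(n)})^{-1} B^T)^{-1} (B − B (D + Σ_E^{(n)})^{-1} D) β_X converge to the omitted variable bias vector A^{-1} B β_X. -/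
open Matrix

section Helpers

variable {p d : ℕ}

private lemma elim_ne_zero_left {x : Fin p → ℝ} (hx : x ≠ 0) :
    Sum.elim x (0 : Fin d → ℝ) ≠ 0 := by
  intro h
  apply hx
  funext i
  have := congrFun h (Sum.inl i)
  simpa using this

private lemma elim_ne_zero_right {y : Fin d → ℝ} (hy : y ≠ 0) :
    Sum.elim (0 : Fin p → ℝ) y ≠ 0 := by
  intro h
  apply hy
  funext i
  have := congrFun h (Sum.inr i)
  simpa using this

private lemma posDef_left {A : Matrix (Fin p) (Fin p) ℝ} {B : Matrix (Fin p) (Fin d) ℝ}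
    {D : Matrix (Fin d) (Fin d) ℝ} (hS : (Matrix.fromBlocks A B Bᵀ D).PosDef) :
    A.PosDef := by
  obtain ⟨hH, hpos⟩ := posDef_iff_dotProduct_mulVec.mp hS
  rw [isHermitian_fromBlocks_iff] at hH
  refine posDef_iff_dotProduct_mulVec.mpr ⟨hH.1, fun x hx => ?_⟩
  have := hpos (elim_ne_zero_left (d := d) hx)
  simpa [fromBlocks_mulVec, sumElim_dotProduct_sumElim] using this

private lemma posDef_right {A : Matrix (Fin p) (Fin p) ℝ} {B : Matrix (Fin p) (Fin d) ℝ}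
    {D : Matrix (Fin d) (Fin d) ℝ} (hS : (Matrix.fromBlocks A B Bᵀ D).PosDef) :
    D.PosDef := by
  obtain ⟨hH, hpos⟩ := posDef_iff_dotProduct_mulVec.mp hS
  rw [isHermitian_fromBlocks_iff] at hH
  refine posDef_iff_dotProduct_mulVec.mpr ⟨hH.2.2.2, fun y hy => ?_⟩
  have := hpos (elim_ne_zero_right (p := p) hy)
  simpa [fromBlocks_mulVec, sumElim_dotProduct_sumElim] using this

/-- adding a PSD matrix to the lower-right block keeps the block matrix PosDef -/
private lemma blocks_add_psd {A : Matrix (Fin p) (Fin p) ℝ} {B : Matrix (Fin p) (Fin d) ℝ}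
    {D : Matrix (Fin d) (Fin d) ℝ} (hS : (Matrix.fromBlocks A B Bᵀ D).PosDef)
    {SE : Matrix (Fin d) (Fin d) ℝ} (hSE : SE.PosSemidef) :
    (Matrix.fromBlocks A B Bᵀ (D + SE)).PosDef := by
  obtain ⟨hH, hpos⟩ := posDef_iff_dotProduct_mulVec.mp hS
  refine posDef_iff_dotProduct_mulVec.mpr ⟨?_, ?_⟩
  · rw [isHermitian_fromBlocks_iff] at hH ⊢
    exact ⟨hH.1, hH.2.1, hH.2.2.1, hH.2.2.2.add hSE.1⟩
  · intro x hx
    have h1 := hpos hx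
    have h2 := hSE.dotProduct_mulVec_nonneg (x ∘ Sum.inr)
    have hB : Matrix.fromBlocks A B Bᵀ (D + SE)
        = Matrix.fromBlocks A B Bᵀ D + Matrix.fromBlocks 0 0 0 SE := by
      rw [Matrix.fromBlocks_add]; simp
    have h3 : star x ⬝ᵥ (Matrix.fromBlocks (0 : Matrix (Fin p) (Fin p) ℝ) 0 0 SE) *ᵥ x
        = star (x ∘ Sum.inr) ⬝ᵥ SE *ᵥ (x ∘ Sum.inr) := by
      simp only [star_trivial]
      rw [← Sum.elim_comp_inl_inr x]
      simp [fromBlocks_mulVec, sumElim_dotProduct_sumElim]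
      simp [dotProduct, Fintype.sum_sum_type]
    rw [hB, Matrix.add_mulVec, dotProduct_add, h3]
    exact lt_add_of_pos_of_le h1 h2

private lemma schur_posDef {A : Matrix (Fin p) (Fin p) ℝ} {B : Matrix (Fin p) (Fin d) ℝ}
    {D : Matrix (Fin d) (Fin d) ℝ} (hS : (Matrix.fromBlocks A B Bᵀ D).PosDef) :
    (A - B * D⁻¹ * Bᵀ).PosDef := by
  have hD : D.PosDef := posDef_right hS
  haveI : Invertible D := D.invertibleOfIsUnitDet ((isUnit_iff_isUnit_det D).mp hD.isUnit)
  have hBt : Bᴴ = Bᵀ := by ext i j; simp [conjTranspose_apply]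
  refine posDef_iff_dotProduct_mulVec.mpr ⟨?_, ?_⟩
  · have hH := hS.1
    rw [isHermitian_fromBlocks_iff] at hH
    have : (B * D⁻¹ * Bᴴ).IsHermitian := isHermitian_mul_mul_conjTranspose B hD.1.inv
    rw [hBt] at this
    exact hH.1.sub this
  · intro x hx
    set y : Fin d → ℝ := -((D⁻¹ * Bᵀ) *ᵥ x) with hy
    have key := Matrix.schur_complement_eq₂₂ A B x y hD.1
    rw [hBt] at key
    have h0 : (D⁻¹ * Bᵀ) *ᵥ x + y = 0 := by rw [hy]; ring
    rw [h0] at key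
    simp only [star_trivial, Matrix.zero_vecMul, zero_dotProduct, zero_add] at key
    have hxy : Sum.elim x y ≠ 0 := by
      intro h
      apply hx
      funext i
      have := congrFun h (Sum.inl i)
      simpa using this
    have hpos := hS.dotProduct_mulVec_pos hxy
    rw [dotProduct_mulVec] at hpos
    simp only [star_trivial] at hpos key
    rw [key] at hpos
    rw [dotProduct_mulVec]
    simpa using hpos

/-- entrywise bound on the inverse from a Rayleigh lower bound -/
private lemma inv_entry_bound {N : Matrix (Fin d) (Fin d) ℝ} (hN : N.PosDef) {r : ℝ}
    (hr : 0 < r) (h : ∀ x : Fin d → ℝ, r * (x ⬝ᵥ x) ≤ x ⬝ᵥ N *ᵥ x) (i j : Fin d) :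
    |N⁻¹ i j| ≤ 1 / r := by
  set u : Fin d → ℝ := N⁻¹ *ᵥ Pi.single j 1 with hu
  have hNinv : N * N⁻¹ = 1 := Matrix.mul_nonsing_inv N ((isUnit_iff_isUnit_det N).mp hN.isUnit)
  have hNu : N *ᵥ u = Pi.single j 1 := by
    rw [hu, Matrix.mulVec_mulVec, hNinv, Matrix.one_mulVec]
  have huij : N⁻¹ i j = u i := by
    simp [hu, Matrix.mulVec, dotProduct, Pi.single_apply]
  set q : ℝ := u ⬝ᵥ u with hq
  have hq_nonneg : 0 ≤ q := by
    rw [hq]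
    exact Finset.sum_nonneg fun k _ => mul_self_nonneg _
  have hterm : ∀ k : Fin d, (u k) ^ 2 ≤ q := by
    intro k
    rw [hq, dotProduct]
    calc (u k) ^ 2 = u k * u k := by ring
    _ ≤ ∑ l, u l * u l := Finset.single_le_sum (f := fun l => u l * u l)
      (fun l _ => mul_self_nonneg _) (Finset.mem_univ k)
  have hkey : r * q ≤ u j := by
    have := h u
    rw [hNu] at this
    simpa [hq, dotProduct, Pi.single_apply] using this
  set s : ℝ := Real.sqrt q with hs
  have hs_nonneg : 0 ≤ s := Real.sqrt_nonneg q
  have hs_sq : s ^ 2 = q := Real.sq_sqrt hq_nonneg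
  have huj : u j ≤ s := by
    have : |u j| ≤ s := by
      rw [hs, ← Real.sqrt_sq_eq_abs]
      exact Real.sqrt_le_sqrt (hterm j)
    exact (le_abs_self _).trans this
  have hsr : s ≤ 1 / r := by
    rcases eq_or_lt_of_le hs_nonneg with h0 | h0
    · rw [← h0]; positivity
    · have : r * s ^ 2 ≤ s := by rw [hs_sq]; exact hkey.trans huj
      rw [le_div_iff₀ hr]
      nlinarith
  have hui : |u i| ≤ s := by
    rw [hs, ← Real.sqrt_sq_eq_abs]
    exact Real.sqrt_le_sqrt (hterm i)
  rw [huij]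
  exact hui.trans hsr

end Helpers

set_option maxHeartbeats 1000000 in
/-- Omitted variable bias as the limit of classical measurement
error bias: if the block covariance matrix `[[A, B], [Bᵀ, D]]` is symmetric
positive definite, then for every symmetric positive semidefinite `Σ_E` the
matrices `D + Σ_E` and `A - B (D + Σ_E)⁻¹ Bᵀ` are invertible, and for every
sequence of symmetric positive semidefinite matrices whose smallest eigenvalues
tend to `+∞` (expressed via Rayleigh quotients), the measurement error bias
vectors converge to the omitted variable bias vector `A⁻¹ B βX`. -/
theorem meb_tendsto_ovb_as_error_grows
    (p d : ℕ) (A : Matrix (Fin p) (Fin p) ℝ)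
    (B : Matrix (Fin p) (Fin d) ℝ) (D : Matrix (Fin d) (Fin d) ℝ)
    (hS : (Matrix.fromBlocks A B Bᵀ D).PosDef) (βX : Fin d → ℝ) :
    (∀ SE : Matrix (Fin d) (Fin d) ℝ, SE.PosSemidef →
      IsUnit (D + SE) ∧ IsUnit (A - B * (D + SE)⁻¹ * Bᵀ)) ∧
    ∀ SE : ℕ → Matrix (Fin d) (Fin d) ℝ,
      (∀ n, (SE n).PosSemidef) →
      (∀ r : ℝ, ∀ᶠ n in Filter.atTop,
        ∀ x : Fin d → ℝ, r * (x ⬝ᵥ x) ≤ x ⬝ᵥ (SE n).mulVec x) →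
      Filter.Tendsto
        (fun n => ((A - B * (D + SE n)⁻¹ * Bᵀ)⁻¹
          * (B - B * (D + SE n)⁻¹ * D)).mulVec βX)
        Filter.atTop (nhds ((A⁻¹ * B).mulVec βX)) := by
  have hA : A.PosDef := posDef_left hS
  have hD : D.PosDef := posDef_right hS
  constructor
  · intro SE hSE
    have hS' := blocks_add_psd hS hSE
    exact ⟨(posDef_right hS').isUnit, (schur_posDef hS').isUnit⟩
  · intro SE hSE hRay
    -- the inverses tend to zero
    have hM0 : Filter.Tendsto (fun n => (D + SE n)⁻¹) Filter.atTop
        (nhds (0 : Matrix (Fin d) (Fin d) ℝ)) := by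
      refine tendsto_pi_nhds.mpr ?_
      intro i
      rw [tendsto_pi_nhds]
      intro j
      rw [Metric.tendsto_atTop]
      intro ε hε
      have hr : (0:ℝ) < 2 / ε := by positivity
      obtain ⟨N, hN⟩ := (Filter.eventually_atTop.mp (hRay (2 / ε)))
      refine ⟨N, fun n hn => ?_⟩
      have hNpd : (D + SE n).PosDef := posDef_right (blocks_add_psd hS (hSE n))
      have hray : ∀ x : Fin d → ℝ, (2 / ε) * (x ⬝ᵥ x) ≤ x ⬝ᵥ (D + SE n) *ᵥ x := by
        intro x
        have h1 := hN n hn x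
        have h2 : (0:ℝ) ≤ x ⬝ᵥ D *ᵥ x := by
          have := hD.posSemidef.dotProduct_mulVec_nonneg x
          simpa using this
        calc (2 / ε) * (x ⬝ᵥ x) ≤ x ⬝ᵥ (SE n) *ᵥ x := h1
        _ ≤ x ⬝ᵥ D *ᵥ x + x ⬝ᵥ (SE n) *ᵥ x := le_add_of_nonneg_left h2
        _ = x ⬝ᵥ (D + SE n) *ᵥ x := by rw [Matrix.add_mulVec, dotProduct_add]
      have hb := inv_entry_bound hNpd hr hray i j
      have : (1:ℝ) / (2 / ε) = ε / 2 := by field_simp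
      rw [this] at hb
      simp only [Matrix.zero_apply, Pi.zero_apply, Real.dist_eq, sub_zero]
      calc |(D + SE n)⁻¹ i j| ≤ ε / 2 := hb
      _ < ε := by linarith
    -- continuity of the bias map at 0
    have hgc : ContinuousAt
        (fun M : Matrix (Fin d) (Fin d) ℝ =>
          ((A - B * M * Bᵀ)⁻¹ * (B - B * M * D)).mulVec βX) 0 := by
      have hc1 : Continuous fun M : Matrix (Fin d) (Fin d) ℝ => A - B * M * Bᵀ :=
        continuous_const.sub ((continuous_const.matrix_mul continuous_id).matrix_mul
          continuous_const)
      have hAdet : IsUnit A.det := (isUnit_iff_isUnit_det A).mp hA.isUnit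
      have hinv : ContinuousAt Inv.inv (A - B * (0 : Matrix (Fin d) (Fin d) ℝ) * Bᵀ) := by
        have hA0 : A - B * (0 : Matrix (Fin d) (Fin d) ℝ) * Bᵀ = A := by simp
        rw [hA0]
        refine continuousAt_matrix_inv A ?_
        obtain ⟨u, hu⟩ := hAdet
        rw [← hu]
        exact NormedRing.inverse_continuousAt u
      have hc2 : ContinuousAt (fun M : Matrix (Fin d) (Fin d) ℝ => (A - B * M * Bᵀ)⁻¹) 0 :=
        ContinuousAt.comp (g := Inv.inv) hinv hc1.continuousAt
      have hF : Continuous (fun q : Matrix (Fin p) (Fin p) ℝ × Matrix (Fin d) (Fin d) ℝ =>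
          (q.1 * (B - B * q.2 * D)).mulVec βX) :=
        (continuous_fst.matrix_mul (continuous_const.sub
          ((continuous_const.matrix_mul continuous_snd).matrix_mul
            continuous_const))).matrix_mulVec continuous_const
      exact ContinuousAt.comp
        (g := fun q : Matrix (Fin p) (Fin p) ℝ × Matrix (Fin d) (Fin d) ℝ =>
          (q.1 * (B - B * q.2 * D)).mulVec βX)
        (f := fun M : Matrix (Fin d) (Fin d) ℝ => ((A - B * M * Bᵀ)⁻¹, M))
        hF.continuousAt (hc2.prodMk continuousAt_id)
    have := hgc.tendsto.comp hM0
    simp only [Function.comp_def] at this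
    convert this using 2
    simp
end

section
/- Let p = 1, d = 2, and set A = 1 (a 1×1 matrix), B = (0.2, 0.1) (a 1×2 matrix), D the 2×2 matrix with diagonal entries 1 and off-diagonal entries 0.15, Σ_E the 2×2 matrix with rows (0.7, 0.05) and (0.05, 0.4), and β_X = (1, −2). Then the omitted variable bias A^{-1} B β_X equals 0, while the measurement error bias (A − B (D + Σ_E)^{-1} B^T)^{-1} (B − B (D + Σ_E)^{-1} D) β_X is strictly positive (in particular nonzero). -/
open Matrix

/-- Explicit example with `p = 1`, `d = 2` showing that under
classical measurement error the omitted variable bias `A⁻¹ B βX` can be zero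
while the measurement error bias
`(A - B (D + Σ_E)⁻¹ Bᵀ)⁻¹ (B - B (D + Σ_E)⁻¹ D) βX` is strictly positive. -/
theorem meb_can_exceed_ovb_example
    (A : Matrix (Fin 1) (Fin 1) ℝ) (B : Matrix (Fin 1) (Fin 2) ℝ)
    (D SE : Matrix (Fin 2) (Fin 2) ℝ) (βX : Fin 2 → ℝ)
    (hA : A = 1) (hB : B = !![0.2, 0.1])
    (hD : D = !![1, 0.15; 0.15, 1])
    (hSE : SE = !![0.7, 0.05; 0.05, 0.4])
    (hβX : βX = ![1, -2]) :
    (A⁻¹ * B).mulVec βX = 0 ∧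
    0 < ((A - B * (D + SE)⁻¹ * Bᵀ)⁻¹
      * (B - B * (D + SE)⁻¹ * D)).mulVec βX 0 := by
  subst hA hB hD hSE hβX
  constructor
  · funext i
    fin_cases i
    simp [Matrix.mulVec, Matrix.mul_apply, Matrix.inv_def, Matrix.adjugate_fin_one,
      Fin.sum_univ_succ, Ring.inverse_eq_inv]
    norm_num
  · simp [Matrix.mulVec, Matrix.mul_apply, Matrix.inv_def, Matrix.adjugate_fin_one,
      Matrix.adjugate_fin_two, Matrix.det_fin_two, Matrix.det_fin_one,
      Matrix.vecHead, Matrix.vecTail, Matrix.vecMul, dotProduct,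
      Fin.sum_univ_succ, Ring.inverse_eq_inv]
    norm_num
end

section
/- Let p = d = 1 and let A, B, D, κ, β_X be real numbers with A > 0 and A·D − B² > 0. Define C = B + κA, F = D + κB, and G = D + 2κB + κ²A. Then G > 0, A − C²/G > 0, and the measurement error bias ((B − C·F/G) / (A − C²/G)) · β_X equals −κ·β_X. In particular, if B = 0 the omitted variable bias A^{-1}·B·β_X is zero, while the measurement error bias equals −κ·β_X and can be made arbitrarily large in magnitude by choice of κ. -/
/-- Counterexample with `p = d = 1` and proxy `W = X + κZ`:
with `C = B + κA`, `F = D + κB`, `G = D + 2κB + κ²A`, one has `G > 0`,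
`A - C²/G > 0`, and the measurement error bias `((B - CF/G)/(A - C²/G)) βX`
equals `-κ βX`; in particular, if `B = 0` the omitted variable bias
`A⁻¹ B βX` is zero. -/
theorem meb_counterexample_scalar
    (A B D κ βX : ℝ) (hA : 0 < A) (hAD : 0 < A * D - B ^ 2)
    (C F G : ℝ) (hC : C = B + κ * A) (hF : F = D + κ * B)
    (hG : G = D + 2 * κ * B + κ ^ 2 * A) :
    0 < G ∧ 0 < A - C ^ 2 / G ∧
    (B - C * F / G) / (A - C ^ 2 / G) * βX = -κ * βX ∧
    (B = 0 → A⁻¹ * B * βX = 0) := by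
  have hAG : 0 < A * G := by nlinarith [sq_nonneg (B + κ * A)]
  have hGpos : 0 < G := by nlinarith
  have hGne : G ≠ 0 := ne_of_gt hGpos
  have hnum : A - C ^ 2 / G = (A * D - B ^ 2) / G := by
    field_simp
    subst hC hG; ring
  have h2 : 0 < A - C ^ 2 / G := by
    rw [hnum]; positivity
  refine ⟨hGpos, h2, ?_, ?_⟩
  · have hb : B - C * F / G = -κ * ((A * D - B ^ 2) / G) := by
      field_simp
      subst hC hF hG; ring
    rw [hb, hnum]
    have hne : (A * D - B ^ 2) / G ≠ 0 := ne_of_gt (by positivity)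
    field_simp
  · intro h; simp [h]
end

section
/- Let (Ω, F, P) be a probability space, and let Y, Z^(1),…,Z^(p), X^(1),…,X^(d), W^(1),…,W^(d) be square-integrable real random variables. Define the (p+d)×(p+d) covariance matrix Σ_M of the vector (Z, W) and assume it is invertible. Let B be the p×d matrix with B_{kj} = Cov(Z^(k), X^(j)), C the p×d matrix with C_{kj} = Cov(Z^(k), W^(j)), F the d×d matrix with F_{jl} = Cov(X^(j), W^(l)), and G the d×d matrix with G_{jl} = Cov(W^(j), W^(l)). Suppose α ∈ R and β = (β_Z, β_X) ∈ R^{p+d} are such that ε := Y − α − Σ_k β_{Z,k} Z^(k) − Σ_j β_{X,j} X^(j) satisfies Cov(Z^(k), ε) = 0 for all k, Cov(X^(j), ε) = 0 for all j, and additionally Cov(W^(j) − X^(j), ε) = 0 for all j. Suppose α'' ∈ R and δ = (δ_Z, δ_W) ∈ R^{p+d} are such that Y − α'' − Σ_k δ_{Z,k} Z^(k) − Σ_j δ_{W,j} W^(j) is uncorrelated with every Z^(k) and every W^(j). Then δ − β = Σ_M^{-1} Σ_{M,E} β, where Σ_{M,E} is the (p+d)×(p+d) block matrix with upper-left p×p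 block zero, upper-right block B − C, lower-left block zero, and lower-right block F^T − G. -/
open MeasureTheory Matrix

/-- Covariance of two real random variables under the measure `P`. -/
noncomputable def cov {Ω : Type*} [MeasurableSpace Ω] (P : Measure Ω)
    (f g : Ω → ℝ) : ℝ :=
  ∫ ω, (f ω - ∫ x, f x ∂P) * (g ω - ∫ x, g x ∂P) ∂P

section helpers

variable {Ω : Type*} [MeasurableSpace Ω] (P : Measure Ω) [IsProbabilityMeasure P]

lemma memL2_mul_integrable {f g : Ω → ℝ} (hf : MemLp f 2 P) (hg : MemLp g 2 P) :
    Integrable (fun ω => f ω * g ω) P := by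
  have h : MemLp (f • g) 1 P := hg.smul hf (hpqr := ⟨by simp [one_div, ENNReal.inv_two_add_inv_two]⟩)
  exact memLp_one_iff_integrable.mp h

lemma integrable_centered {f g : Ω → ℝ} (hf : MemLp f 2 P) (hg : MemLp g 2 P) :
    Integrable (fun ω => (f ω - ∫ x, f x ∂P) * (g ω - ∫ x, g x ∂P)) P :=
  memL2_mul_integrable P (hf.sub (memLp_const _)) (hg.sub (memLp_const _))

lemma cov_comm (f g : Ω → ℝ) : cov P f g = cov P g f := by
  simp only [cov, mul_comm]

lemma cov_const_right (f : Ω → ℝ) (c : ℝ) : cov P f (fun _ => c) = 0 := by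
  simp [cov, integral_const, measure_univ]

lemma cov_sub_right (f g h : Ω → ℝ) (hf : MemLp f 2 P) (hg : MemLp g 2 P)
    (hh : MemLp h 2 P) :
    cov P f (fun ω => g ω - h ω) = cov P f g - cov P f h := by
  have hm : ∫ x, (g x - h x) ∂P = (∫ x, g x ∂P) - ∫ x, h x ∂P :=
    integral_sub (hg.integrable one_le_two) (hh.integrable one_le_two)
  simp only [cov, hm]
  rw [← integral_sub (integrable_centered P hf hg) (integrable_centered P hf hh)]
  congr 1; funext ω; ring

lemma cov_add_right (f g h : Ω → ℝ) (hf : MemLp f 2 P) (hg : MemLp g 2 P)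
    (hh : MemLp h 2 P) :
    cov P f (fun ω => g ω + h ω) = cov P f g + cov P f h := by
  have hm : ∫ x, (g x + h x) ∂P = (∫ x, g x ∂P) + ∫ x, h x ∂P :=
    integral_add (hg.integrable one_le_two) (hh.integrable one_le_two)
  simp only [cov, hm]
  rw [← integral_add (integrable_centered P hf hg) (integrable_centered P hf hh)]
  congr 1; funext ω; ring

lemma cov_const_mul_right (f g : Ω → ℝ) (c : ℝ) :
    cov P f (fun ω => c * g ω) = cov P f g * c := by
  simp only [cov, integral_const_mul]
  have : ∀ ω, (f ω - ∫ x, f x ∂P) * (c * g ω - c * ∫ x, g x ∂P)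
      = c * ((f ω - ∫ x, f x ∂P) * (g ω - ∫ x, g x ∂P)) := fun ω => by ring
  simp_rw [this]
  rw [integral_const_mul]; ring

lemma cov_sum_right {ι : Type*} (f : Ω → ℝ) (hf : MemLp f 2 P) (s : Finset ι)
    (g : ι → Ω → ℝ) (hg : ∀ i ∈ s, MemLp (g i) 2 P) (c : ι → ℝ) :
    cov P f (fun ω => ∑ i ∈ s, c i * g i ω) = ∑ i ∈ s, cov P f (g i) * c i := by
  classical
  induction s using Finset.induction with
  | empty => simpa using cov_const_right P f 0
  | @insert a s ha ih =>
    simp only [Finset.sum_insert ha]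
    rw [cov_add_right P f (fun ω => c a * g a ω) (fun ω => ∑ i ∈ s, c i * g i ω)
        hf ((hg a (Finset.mem_insert_self a s)).const_mul (c a))
        (memLp_finset_sum s fun i hi =>
          (hg i (Finset.mem_insert_of_mem hi)).const_mul (c i)),
      cov_const_mul_right, ih fun i hi => hg i (Finset.mem_insert_of_mem hi)]

lemma memL2_resid {p d : ℕ} (Y : Ω → ℝ) (Z : Fin p → Ω → ℝ) (X : Fin d → Ω → ℝ)
    (hY : MemLp Y 2 P) (hZ : ∀ k, MemLp (Z k) 2 P) (hX : ∀ j, MemLp (X j) 2 P)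
    (α : ℝ) (a : Fin p → ℝ) (b : Fin d → ℝ) :
    MemLp (fun ω => Y ω - α - ∑ k', a k' * Z k' ω - ∑ j, b j * X j ω) 2 P := by
  have h2 : MemLp (fun ω => ∑ k', a k' * Z k' ω) 2 P :=
    memLp_finset_sum _ fun k _ => (hZ k).const_mul (a k)
  have h3 : MemLp (fun ω => ∑ j, b j * X j ω) 2 P :=
    memLp_finset_sum _ fun j _ => (hX j).const_mul (b j)
  exact ((hY.sub (memLp_const α)).sub h2).sub h3

lemma cov_resid {p d : ℕ} (f Y : Ω → ℝ) (Z : Fin p → Ω → ℝ) (X : Fin d → Ω → ℝ)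
    (hf : MemLp f 2 P) (hY : MemLp Y 2 P) (hZ : ∀ k, MemLp (Z k) 2 P)
    (hX : ∀ j, MemLp (X j) 2 P) (α : ℝ) (a : Fin p → ℝ) (b : Fin d → ℝ) :
    cov P f (fun ω => Y ω - α - ∑ k', a k' * Z k' ω - ∑ j, b j * X j ω)
      = cov P f Y - ∑ k', cov P f (Z k') * a k' - ∑ j, cov P f (X j) * b j := by
  have h1 : MemLp (fun ω => Y ω - α) 2 P := hY.sub (memLp_const α)
  have h2 : MemLp (fun ω => ∑ k', a k' * Z k' ω) 2 P :=
    memLp_finset_sum _ fun k _ => (hZ k).const_mul (a k)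
  have h3 : MemLp (fun ω => ∑ j, b j * X j ω) 2 P :=
    memLp_finset_sum _ fun j _ => (hX j).const_mul (b j)
  rw [cov_sub_right P f (fun ω => Y ω - α - ∑ k', a k' * Z k' ω)
        (fun ω => ∑ j, b j * X j ω) hf (h1.sub h2) h3,
    cov_sub_right P f (fun ω => Y ω - α) (fun ω => ∑ k', a k' * Z k' ω) hf h1 h2,
    cov_sub_right P f Y (fun _ => α) hf hY (memLp_const α), cov_const_right,
    cov_sum_right P f hf _ Z (fun k _ => hZ k) a,
    cov_sum_right P f hf _ X (fun j _ => hX j) b]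
  ring

end helpers

/-- Population measurement error bias formula: if `(α, β)`
satisfy the normal equations for regressing `Y` on the true covariates `(Z, X)`,
the residual `ε` is additionally uncorrelated with the measurement errors
`W - X`, and `(α'', δ)` satisfy the normal equations for regressing `Y` on the
observed covariates `(Z, W)`, then `δ - β = Σ_M⁻¹ Σ_{M,E} β`. -/
theorem population_meb_formula
    {Ω : Type*} [MeasurableSpace Ω] (P : Measure Ω) [IsProbabilityMeasure P]
    (p d : ℕ) (Y : Ω → ℝ) (Z : Fin p → Ω → ℝ)
    (X W : Fin d → Ω → ℝ)
    (hY : MemLp Y 2 P) (hZ : ∀ k, MemLp (Z k) 2 P)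
    (hX : ∀ j, MemLp (X j) 2 P) (hW : ∀ j, MemLp (W j) 2 P)
    (A : Matrix (Fin p) (Fin p) ℝ)
    (hA : A = Matrix.of fun k l => cov P (Z k) (Z l))
    (B : Matrix (Fin p) (Fin d) ℝ)
    (hB : B = Matrix.of fun k j => cov P (Z k) (X j))
    (C : Matrix (Fin p) (Fin d) ℝ)
    (hC : C = Matrix.of fun k j => cov P (Z k) (W j))
    (F : Matrix (Fin d) (Fin d) ℝ)
    (hF : F = Matrix.of fun j l => cov P (X j) (W l))
    (G : Matrix (Fin d) (Fin d) ℝ)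
    (hG : G = Matrix.of fun j l => cov P (W j) (W l))
    (hSM : IsUnit (Matrix.fromBlocks A C Cᵀ G))
    (α : ℝ) (βZ : Fin p → ℝ) (βX : Fin d → ℝ)
    (hεZ : ∀ k, cov P (Z k)
      (fun ω => Y ω - α - ∑ k', βZ k' * Z k' ω - ∑ j, βX j * X j ω) = 0)
    (hεX : ∀ j, cov P (X j)
      (fun ω => Y ω - α - ∑ k', βZ k' * Z k' ω - ∑ j', βX j' * X j' ω) = 0)
    (hεE : ∀ j, cov P (fun ω => W j ω - X j ω)
      (fun ω => Y ω - α - ∑ k', βZ k' * Z k' ω - ∑ j', βX j' * X j' ω) = 0)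
    (α'' : ℝ) (δZ : Fin p → ℝ) (δW : Fin d → ℝ)
    (hδZ : ∀ k, cov P (Z k)
      (fun ω => Y ω - α'' - ∑ k', δZ k' * Z k' ω - ∑ j, δW j * W j ω) = 0)
    (hδW : ∀ j, cov P (W j)
      (fun ω => Y ω - α'' - ∑ k', δZ k' * Z k' ω - ∑ j', δW j' * W j' ω) = 0) :
    Sum.elim δZ δW - Sum.elim βZ βX
      = ((Matrix.fromBlocks A C Cᵀ G)⁻¹
          * Matrix.fromBlocks (0 : Matrix (Fin p) (Fin p) ℝ) (B - C)
              (0 : Matrix (Fin d) (Fin p) ℝ) (Fᵀ - G)).mulVec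
          (Sum.elim βZ βX) := by
    classical
  have hRβ : MemLp (fun ω => Y ω - α - ∑ k', βZ k' * Z k' ω - ∑ j', βX j' * X j' ω) 2 P :=
    memL2_resid P Y Z X hY hZ hX α βZ βX
  have eδZ : ∀ k, cov P (Z k) Y - ∑ l, cov P (Z k) (Z l) * δZ l
      - ∑ j, cov P (Z k) (W j) * δW j = 0 := fun k => by
    have h := hδZ k
    rwa [cov_resid P (Z k) Y Z W (hZ k) hY hZ hW α'' δZ δW] at h
  have eβZ : ∀ k, cov P (Z k) Y - ∑ l, cov P (Z k) (Z l) * βZ l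
      - ∑ j, cov P (Z k) (X j) * βX j = 0 := fun k => by
    have h := hεZ k
    rwa [cov_resid P (Z k) Y Z X (hZ k) hY hZ hX α βZ βX] at h
  have eδW : ∀ j, cov P (W j) Y - ∑ l, cov P (W j) (Z l) * δZ l
      - ∑ j', cov P (W j) (W j') * δW j' = 0 := fun j => by
    have h := hδW j
    rwa [cov_resid P (W j) Y Z W (hW j) hY hZ hW α'' δZ δW] at h
  have hWr : ∀ j, cov P (W j)
      (fun ω => Y ω - α - ∑ k', βZ k' * Z k' ω - ∑ j', βX j' * X j' ω) = 0 := fun j => by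
    have h1 := hεE j
    have h2 := hεX j
    have h3 : cov P (fun ω => W j ω - X j ω)
        (fun ω => Y ω - α - ∑ k', βZ k' * Z k' ω - ∑ j', βX j' * X j' ω)
        = cov P (W j) (fun ω => Y ω - α - ∑ k', βZ k' * Z k' ω - ∑ j', βX j' * X j' ω)
          - cov P (X j) (fun ω => Y ω - α - ∑ k', βZ k' * Z k' ω - ∑ j', βX j' * X j' ω) := by
      rw [cov_comm, cov_sub_right P
        (fun ω => Y ω - α - ∑ k', βZ k' * Z k' ω - ∑ j', βX j' * X j' ω)
        (W j) (X j) hRβ (hW j) (hX j),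
        cov_comm P _ (W j), cov_comm P _ (X j)]
    rw [h3, h2, sub_zero] at h1
    exact h1
  have eβW : ∀ j, cov P (W j) Y - ∑ l, cov P (W j) (Z l) * βZ l
      - ∑ j', cov P (W j) (X j') * βX j' = 0 := fun j => by
    have h := hWr j
    rwa [cov_resid P (W j) Y Z X (hW j) hY hZ hX α βZ βX] at h
  set M := Matrix.fromBlocks A C Cᵀ G with hM
  set E := Matrix.fromBlocks (0 : Matrix (Fin p) (Fin p) ℝ) (B - C)
      (0 : Matrix (Fin d) (Fin p) ℝ) (Fᵀ - G) with hE
  have hdet : IsUnit M.det := (Matrix.isUnit_iff_isUnit_det M).mp hSM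
  have key : M.mulVec (Sum.elim δZ δW - Sum.elim βZ βX) = E.mulVec (Sum.elim βZ βX) := by
    funext i
    cases i with
    | inl k =>
      have h1 := eδZ k
      have h2 := eβZ k
      simp only [hM, hE, hA, hB, hC, Matrix.mulVec, dotProduct,
        Fintype.sum_sum_type, Matrix.fromBlocks_apply₁₁, Matrix.fromBlocks_apply₁₂,
        Sum.elim_inl, Sum.elim_inr, Pi.sub_apply, Matrix.sub_apply, Matrix.zero_apply,
        Matrix.of_apply, zero_mul, Finset.sum_const_zero, zero_add, mul_sub, sub_mul,
        Finset.sum_sub_distrib]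
      linarith
    | inr j =>
      have h1 := eδW j
      have h2 := eβW j
      have c1 : ∀ l, cov P (Z l) (W j) = cov P (W j) (Z l) := fun l => cov_comm P _ _
      have c2 : ∀ j', cov P (X j') (W j) = cov P (W j) (X j') := fun j' => cov_comm P _ _
      simp only [hM, hE, hA, hC, hF, hG, Matrix.mulVec, dotProduct,
        Fintype.sum_sum_type, Matrix.fromBlocks_apply₂₁, Matrix.fromBlocks_apply₂₂,
        Sum.elim_inl, Sum.elim_inr, Pi.sub_apply, Matrix.sub_apply, Matrix.zero_apply,
        Matrix.transpose_apply, Matrix.of_apply, zero_mul, Finset.sum_const_zero,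
        zero_add, mul_sub, sub_mul, Finset.sum_sub_distrib, c1, c2]
      linarith
  calc Sum.elim δZ δW - Sum.elim βZ βX
      = (M⁻¹ * M).mulVec (Sum.elim δZ δW - Sum.elim βZ βX) := by
        rw [Matrix.nonsing_inv_mul M hdet, Matrix.one_mulVec]
    _ = M⁻¹.mulVec (M.mulVec (Sum.elim δZ δW - Sum.elim βZ βX)) := by
        rw [← Matrix.mulVec_mulVec]
    _ = M⁻¹.mulVec (E.mulVec (Sum.elim βZ βX)) := by rw [key]
    _ = (M⁻¹ * E).mulVec (Sum.elim βZ βX) := by rw [Matrix.mulVec_mulVec]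
end
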